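/- For natural numbers a, t, r with r ≤ a ≤ r+t-1, r ≥ 1, t ≥ 1, the sum Σ_{j=a-r}^{t-1} C(j+r-1, j) C(j, a-r) equals ((r+t-a)/a) C(r+t-1, t) C(t, a-r). -/

import Mathlib

open Real

lemma ptwise (s r j : ℕ) (hsj : s ≤ j) :
    (j + r).choose j * j.choose s = (s + r).choose s * (j + r).choose (s + r) := by
  have h2 : (j + r).choose (s + r) * (s + r).choose s
      = (j + r).choose s * ((j + r - s).choose (s + r - s)) :=
    Nat.choose_mul (by omega)
  rw [Nat.choose_mul (n := j + r) hsj, mul_comm ((s + r).choose s), h2]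
  congr 1
  rw [show s + r - s = r from by omega, show j - s = j + r - s - r from by omega]
  exact Nat.choose_symm (show r ≤ j + r - s by omega)

lemma key (s r d : ℕ) :
    ∑ j ∈ Finset.Ico s (s + d + 1), ((j + r).choose j : ℝ) * (j.choose s : ℝ)
      = ((s + r).choose s : ℝ) * ((s + d + r + 1).choose (s + r + 1) : ℝ) := by
  have h : ∑ j ∈ Finset.Ico s (s + d + 1), (j + r).choose j * j.choose s
      = (s + r).choose s * (s + d + r + 1).choose (s + r + 1) := by
    rw [Finset.sum_congr rfl (fun j hj => ptwise s r j (Finset.mem_Ico.mp hj).1),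
        ← Finset.mul_sum]
    congr 1
    rw [← Nat.sum_Icc_choose (s + d + r) (s + r), ← Finset.Ico_add_one_right_eq_Icc,
        Finset.sum_Ico_eq_sum_range, Finset.sum_Ico_eq_sum_range]
    apply Finset.sum_congr (by congr 1; omega)
    intro i _
    congr 1
    omega
  exact_mod_cast congrArg (Nat.cast : ℕ → ℝ) h

lemma final (s r d : ℕ) :
    ((r : ℝ) + s + 1) * (((s + r).choose s : ℝ) * ((s + d + r + 1).choose (s + r + 1) : ℝ))
      = ((d : ℝ) + 1) * (((s + d + r + 1).choose (s + d + 1) : ℝ) * ((s + d + 1).choose s : ℝ)) := by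
  rw [Nat.cast_choose ℝ (show s ≤ s + r by omega),
      Nat.cast_choose ℝ (show s + r + 1 ≤ s + d + r + 1 by omega),
      Nat.cast_choose ℝ (show s + d + 1 ≤ s + d + r + 1 by omega),
      Nat.cast_choose ℝ (show s ≤ s + d + 1 by omega),
      show s + r - s = r from by omega,
      show s + d + r + 1 - (s + r + 1) = d from by omega,
      show s + d + r + 1 - (s + d + 1) = r from by omega,
      show s + d + 1 - s = d + 1 from by omega,
      Nat.factorial_succ (s + r), Nat.factorial_succ d]
  have h1 : (Nat.factorial s : ℝ) ≠ 0 := by positivity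
  have h2 : (Nat.factorial r : ℝ) ≠ 0 := by positivity
  have h3 : (Nat.factorial d : ℝ) ≠ 0 := by positivity
  have h4 : (Nat.factorial (s+r) : ℝ) ≠ 0 := by positivity
  have h5 : (Nat.factorial (s+d+1) : ℝ) ≠ 0 := by positivity
  have h6 : ((s+r:ℕ) : ℝ) + 1 ≠ 0 := by positivity
  have h7 : ((d:ℕ) : ℝ) + 1 ≠ 0 := by positivity
  field_simp
  push_cast
  ring

theorem binomial_sum_identity (a t r : ℕ) (hr : 1 ≤ r) (ht : 1 ≤ t) (h1 : r ≤ a)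
    (h2 : a ≤ r + t - 1) :
    ∑ j ∈ Finset.Ico (a - r) t, ((j + r - 1).choose j : ℝ) * (j.choose (a - r) : ℝ)
      = (((r : ℝ) + t - a) / a) * ((r + t - 1).choose t : ℝ) * (t.choose (a - r) : ℝ) := by
  obtain ⟨r', rfl⟩ : ∃ r', r = r' + 1 := ⟨r - 1, by omega⟩
  obtain ⟨s, rfl⟩ : ∃ s, a = s + r' + 1 := ⟨a - r' - 1, by omega⟩
  have hst : s + r' + 1 - (r' + 1) = s := by omega
  rw [hst]
  obtain ⟨d, rfl⟩ : ∃ d, t = s + d + 1 := ⟨t - s - 1, by omega⟩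
  have hsum : ∑ j ∈ Finset.Ico s (s + d + 1), ((j + (r' + 1) - 1).choose j : ℝ) * (j.choose s : ℝ)
      = ((s + r').choose s : ℝ) * ((s + d + r' + 1).choose (s + r' + 1) : ℝ) := by
    rw [← key s r' d]
    refine Finset.sum_congr rfl fun j _ => ?_
    rw [show j + (r' + 1) - 1 = j + r' from by omega]
  rw [hsum]
  have hcast := final s r' d
  push_cast at hcast ⊢
  rw [show ((r':ℝ) + 1 + (↑s + ↑d + 1) - (↑s + ↑r' + 1)) = (d:ℝ) + 1 by ring,
      show (r' + 1 + (s + d + 1) - 1) = s + d + r' + 1 from by omega]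
  have ha0 : (s : ℝ) + r' + 1 ≠ 0 := by positivity
  field_simp
  nlinarith [hcast]
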